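/- Let r > 0 and let x ∈ K₁⁺ with ‖x‖₁ > r. Then the Mordukhovich (Fréchet) coderivative of the metric projection P_{rB} at the point (x, (r/‖x‖₁)·x) evaluated at the zero functional satisfies D̂*P_{rB}(x, (r/‖x‖₁)·x)(θ*) = {θ*}, where θ* is the zero element of l∞. -/

import Mathlib

open scoped ENNReal

/-- The real Banach space `ℓ¹` of absolutely summable real sequences. -/
noncomputable abbrev ell1 : Type := lp (fun _ : ℕ => ℝ) 1

/-- The real Banach space `ℓ∞` of bounded real sequences (the dual of `ℓ¹`). -/
noncomputable abbrev ellInfty : Type := lp (fun _ : ℕ => ℝ) ∞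

/-- The canonical pairing `⟨φ, x⟩ = ∑ₙ φₙ xₙ` between `ℓ∞` and `ℓ¹`. -/
noncomputable def pairing (φ : ellInfty) (x : ell1) : ℝ := ∑' n, φ n * x n

/-- The constant sequence `β_a = (a, a, a, …) ∈ ℓ∞`. -/
noncomputable def betaSeq (a : ℝ) : ellInfty :=
  ⟨fun _ => a, memℓp_infty (bddAbove_singleton.mono Set.range_const_subset)⟩

/-- The set of best approximations of `x` from the closed ball of radius `r`
centered at the origin of `ℓ¹`: `P_{rB}(x) = {u ∈ rB : ‖x − u‖₁ ≤ ‖x − z‖₁ for all z ∈ rB}`. -/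
def projBall (r : ℝ) (x : ell1) : Set ell1 :=
  {u : ell1 | ‖u‖ ≤ r ∧ ∀ z : ell1, ‖z‖ ≤ r → ‖x - u‖ ≤ ‖x - z‖}

/-- `ψ` belongs to the Mordukhovich (Fréchet) coderivative `D̂*P(x, y)(φ)` of the set-valued map
`P : ℓ¹ ⇉ ℓ¹` at `(x, y)` evaluated at `φ`:
`limsup_{(u,v)→(x,y), v ∈ P(u)} (⟨ψ, u − x⟩ − ⟨φ, v − y⟩)/(‖u − x‖ + ‖v − y‖) ≤ 0`. -/
def inCoderiv (P : ell1 → Set ell1) (x y : ell1) (ψ φ : ellInfty) : Prop :=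
  ∀ ε > (0 : ℝ), ∃ δ > (0 : ℝ), ∀ u v : ell1, v ∈ P u → ‖u - x‖ < δ → ‖v - y‖ < δ →
    pairing ψ (u - x) - pairing φ (v - y) ≤ ε * (‖u - x‖ + ‖v - y‖)

noncomputable def eN (n : ℕ) : ell1 := lp.single 1 n (1:ℝ)

lemma pairing_zero_left (v : ell1) : pairing 0 v = 0 := by simp [pairing]

lemma pairing_tsmul (ψ : ellInfty) (n : ℕ) (t : ℝ) :
    pairing ψ (t • eN n) = ψ n * t := by
  unfold pairing eN
  rw [tsum_eq_single n]
  · simp [lp.single_apply_self]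
  · intro m hm; simp [lp.single_apply_ne _ _ _ hm, Pi.single_apply, hm]

lemma norm_tsmul (n : ℕ) (t : ℝ) : ‖t • eN n‖ = |t| := by
  rw [norm_smul]
  have := lp.norm_single (p := 1) (E := fun _ : ℕ => ℝ) (by norm_num) n (1:ℝ)
  simp_all [eN, Real.norm_eq_abs]

lemma mem_projBall_smul {r : ℝ} (hr : 0 < r) {u : ell1} (hu : r ≤ ‖u‖) :
    (r / ‖u‖) • u ∈ projBall r u := by
  have hun : (0:ℝ) < ‖u‖ := hr.trans_le hu
  constructor
  · rw [norm_smul, Real.norm_eq_abs, abs_of_pos (by positivity)]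
    field_simp
    exact le_rfl
  · intro z hz
    have h1 : u - (r / ‖u‖) • u = (1 - r / ‖u‖) • u := by
      rw [sub_smul, one_smul]
    have hfrac : r / ‖u‖ ≤ 1 := (div_le_one hun).mpr hu
    rw [h1, norm_smul, Real.norm_eq_abs, abs_of_nonneg (by linarith)]
    have h2 : ‖u‖ - ‖z‖ ≤ ‖u - z‖ := norm_sub_norm_le u z
    have h3 : (1 - r / ‖u‖) * ‖u‖ = ‖u‖ - r := by field_simp
    linarith

set_option maxHeartbeats 1000000 in
/-- Theorem 3.4 (ii)(a). Let `r > 0` and `x ∈ K₁⁺` with `‖x‖₁ > r`. Then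
the Mordukhovich (Fréchet) coderivative of `P_{rB}` at `(x, (r/‖x‖₁)·x)` evaluated at the
zero functional satisfies `D̂*P_{rB}(x, (r/‖x‖₁)·x)(θ*) = {θ*}`. -/
theorem stmt_7 (r : ℝ) (hr : 0 < r) (x : ell1) (hx_pos : ∀ n, 0 < x n)
    (hx : r < ‖x‖) :
    {ψ : ellInfty | inCoderiv (projBall r) x ((r / ‖x‖) • x) ψ 0} = {0} := by
  have hxn : (0:ℝ) < ‖x‖ := hr.trans hx
  set y : ell1 := (r / ‖x‖) • x with hy
  ext ψ
  simp only [Set.mem_setOf_eq, Set.mem_singleton_iff]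
  constructor
  · intro hψ
    have key : ∀ n : ℕ, ψ n = 0 := by
      intro n
      have habs : ∀ ε > (0:ℝ), |ψ n| ≤ 3 * ε := by
        intro ε hε
        obtain ⟨δ, hδ, H⟩ := hψ ε hε
        have main : ∀ t : ℝ, |t| < δ / 3 → |t| < ‖x‖ - r → ψ n * t ≤ ε * (3 * |t|) := by
          intro t htδ htx
          set u : ell1 := x + t • eN n with hu
          have hux : u - x = t • eN n := by rw [hu]; abel
          have hnux : ‖u - x‖ = |t| := by rw [hux, norm_tsmul]
          have hd : |‖x‖ - ‖u‖| ≤ |t| := by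
            have h := abs_norm_sub_norm_le x u
            rwa [show x - u = -(u - x) by abel, norm_neg, hnux] at h
          have hd' := abs_le.mp hd
          have hru : r ≤ ‖u‖ := by linarith
          have hun : (0:ℝ) < ‖u‖ := hr.trans_le hru
          set v : ell1 := (r / ‖u‖) • u with hv
          have hvP : v ∈ projBall r u := mem_projBall_smul hr hru
          have hvy : ‖v - y‖ ≤ 2 * |t| := by
            have hdecomp : v - y = (r / ‖u‖ - r / ‖x‖) • x + (r / ‖u‖) • (t • eN n) := by
              rw [hv, hu, hy, smul_add, sub_smul]; abel
            have h1 : ‖(r / ‖u‖ - r / ‖x‖) • x‖ ≤ |t| := by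
              rw [norm_smul, Real.norm_eq_abs]
              have heq : r / ‖u‖ - r / ‖x‖ = r * (‖x‖ - ‖u‖) / (‖u‖ * ‖x‖) := by
                field_simp
              rw [heq, abs_div, abs_mul, abs_of_pos hr, abs_of_pos (mul_pos hun hxn)]
              rw [div_mul_eq_mul_div, div_le_iff₀ (mul_pos hun hxn)]
              have habs0 : 0 ≤ |‖x‖ - ‖u‖| := abs_nonneg _
              have hmm : r * |‖x‖ - ‖u‖| ≤ ‖u‖ * |t| :=
                mul_le_mul hru hd habs0 (le_of_lt hun)
              nlinarith [mul_le_mul_of_nonneg_right hmm (le_of_lt hxn)]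
            have h2 : ‖(r / ‖u‖) • (t • eN n)‖ ≤ |t| := by
              rw [norm_smul, norm_tsmul, Real.norm_eq_abs, abs_of_pos (by positivity)]
              have : r / ‖u‖ ≤ 1 := (div_le_one hun).mpr hru
              nlinarith [abs_nonneg t]
            calc ‖v - y‖ ≤ ‖(r / ‖u‖ - r / ‖x‖) • x‖ + ‖(r / ‖u‖) • (t • eN n)‖ := by
                  rw [hdecomp]; exact norm_add_le _ _
              _ ≤ 2 * |t| := by linarith
          have hH := H u v hvP (by rw [hnux]; linarith) (by linarith)
          rw [hux, pairing_tsmul, pairing_zero_left, sub_zero, norm_tsmul] at hH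
          nlinarith [mul_le_mul_of_nonneg_left hvy hε.le]
        set t0 : ℝ := min (δ / 6) ((‖x‖ - r) / 2) with ht0
        have ht0p : 0 < t0 := lt_min (by linarith) (by linarith)
        have ht0a : |t0| = t0 := abs_of_pos ht0p
        have ht0δ : t0 < δ / 3 := lt_of_le_of_lt (min_le_left _ _) (by linarith)
        have ht0x : t0 < ‖x‖ - r := lt_of_le_of_lt (min_le_right _ _) (by linarith)
        have hp := main t0 (by rw [ht0a]; exact ht0δ) (by rw [ht0a]; exact ht0x)
        have hm := main (-t0) (by rw [abs_neg, ht0a]; exact ht0δ)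
          (by rw [abs_neg, ht0a]; exact ht0x)
        rw [ht0a] at hp
        rw [abs_neg, ht0a] at hm
        rcases abs_cases (ψ n) with ⟨he, _⟩ | ⟨he, _⟩
        · rw [he]
          have := mul_le_mul_of_nonneg_right (le_of_lt ht0p) (le_refl (0:ℝ))
          nlinarith
        · rw [he]; nlinarith
      by_contra hne
      have hpos : 0 < |ψ n| := abs_pos.mpr hne
      have := habs (|ψ n| / 6) (by positivity)
      linarith
    ext m
    simp [key m]
  · rintro rfl
    intro ε hε
    refine ⟨1, one_pos, fun u v _ _ _ => ?_⟩
    rw [pairing_zero_left, pairing_zero_left, sub_zero]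
    positivity
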